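/- In the Golub–Kahan bidiagonalization setup, for every k with 1 ≤ k ≤ n−1 one has the identity γ_k^{cgme} = ‖(β_{k+1}e_1, G_k)‖, i.e., the spectral-norm error ‖(I_m − P_k P_kᵀ)A‖ equals the spectral norm of the (n−k+1)×(n−k+1) matrix obtained by prepending the column β_{k+1}e_1 to G_k. -/
import Mathlib

open Matrix
open scoped Matrix.Norms.L2Operator

/-- Spectral norm (largest singular value) of a real matrix. -/
noncomputable def specNorm {a b : ℕ} (M : Matrix (Fin a) (Fin b) ℝ) : ℝ :=
  ‖LinearMap.toContinuousLinearMap (Matrix.toEuclideanLin M)‖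

/-- The `j`-th largest singular value of a real matrix (`j ≥ 1`), characterized via the
Eckart–Young theorem as the minimal spectral-norm distance to matrices of rank `< j`;
it is `0` when `j` exceeds the smaller dimension. -/
noncomputable def singVal {a b : ℕ} (M : Matrix (Fin a) (Fin b) ℝ) (j : ℕ) : ℝ :=
  sInf {r : ℝ | ∃ D : Matrix (Fin a) (Fin b) ℝ, D.rank < j ∧ r = specNorm (M - D)}

/-- The matrix of the first `k` columns of `M`. -/
def colSub {a b : ℕ} (M : Matrix (Fin a) (Fin b) ℝ) (k : ℕ) (hk : k ≤ b) :
    Matrix (Fin a) (Fin k) ℝ :=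
  M.submatrix id fun j => ⟨j.1, lt_of_lt_of_le j.2 hk⟩

/-- The leading `r × c` submatrix of `M`. -/
def subUL {a b : ℕ} (M : Matrix (Fin a) (Fin b) ℝ) (r c : ℕ) (hr : r ≤ a) (hc : c ≤ b) :
    Matrix (Fin r) (Fin c) ℝ :=
  M.submatrix (fun i => ⟨i.1, lt_of_lt_of_le i.2 hr⟩) (fun j => ⟨j.1, lt_of_lt_of_le j.2 hc⟩)

/-! ### Auxiliary material -/

lemma specNorm_eq_l2 {a b : ℕ} (M : Matrix (Fin a) (Fin b) ℝ) : specNorm M = ‖M‖ := rfl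

/-- A selection matrix: columns are standard basis vectors indexed by `f`. -/
def selMat {a b : ℕ} (f : Fin b → Fin a) : Matrix (Fin a) (Fin b) ℝ :=
  Matrix.of fun i j => if i = f j then 1 else 0

lemma mul_selMat_apply {a b c : ℕ} (Y : Matrix (Fin c) (Fin a) ℝ) (f : Fin b → Fin a)
    (i : Fin c) (j : Fin b) : (Y * selMat f) i j = Y i (f j) := by
  simp only [Matrix.mul_apply, selMat, Matrix.of_apply, mul_ite, mul_one, mul_zero]
  rw [Finset.sum_ite_eq' Finset.univ (f j) (fun l => Y i l)]
  simp

lemma selMat_mul_apply_eq {a b c : ℕ} (f : Fin b → Fin a) (hf : Function.Injective f)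
    (Y : Matrix (Fin b) (Fin c) ℝ) (i : Fin a) (p₀ : Fin b) (hi : i = f p₀) (j : Fin c) :
    (selMat f * Y) i j = Y p₀ j := by
  simp only [Matrix.mul_apply, selMat, Matrix.of_apply, ite_mul, one_mul, zero_mul]
  rw [Finset.sum_eq_single p₀]
  · rw [if_pos hi]
  · intro p _ hp
    rw [if_neg]
    intro h
    exact hp (hf (h.symm.trans hi).symm).symm
  · simp

lemma selMat_mul_apply_zero {a b c : ℕ} (f : Fin b → Fin a)
    (Y : Matrix (Fin b) (Fin c) ℝ) (i : Fin a) (hi : ∀ p, i ≠ f p) (j : Fin c) :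
    (selMat f * Y) i j = 0 := by
  simp only [Matrix.mul_apply, selMat, Matrix.of_apply, ite_mul, one_mul, zero_mul]
  exact Finset.sum_eq_zero fun p _ => if_neg (hi p)

lemma mul_selMatT_apply_eq {a b c : ℕ} (g : Fin b → Fin a) (hg : Function.Injective g)
    (Y : Matrix (Fin c) (Fin b) ℝ) (i : Fin c) (j : Fin a) (q₀ : Fin b) (hj : j = g q₀) :
    (Y * (selMat g)ᵀ) i j = Y i q₀ := by
  simp only [Matrix.mul_apply, Matrix.transpose_apply, selMat, Matrix.of_apply, mul_ite,
    mul_one, mul_zero]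
  rw [Finset.sum_eq_single q₀]
  · rw [if_pos hj]
  · intro q _ hq
    rw [if_neg]
    intro h
    exact hq (hg (h.symm.trans hj).symm).symm
  · simp

lemma mul_selMatT_apply_zero {a b c : ℕ} (g : Fin b → Fin a)
    (Y : Matrix (Fin c) (Fin b) ℝ) (i : Fin c) (j : Fin a) (hj : ∀ q, j ≠ g q) :
    (Y * (selMat g)ᵀ) i j = 0 := by
  simp only [Matrix.mul_apply, Matrix.transpose_apply, selMat, Matrix.of_apply, mul_ite,
    mul_one, mul_zero]
  exact Finset.sum_eq_zero fun q _ => if_neg (hj q)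

lemma selMatT_mul_self {a b : ℕ} (f : Fin b → Fin a) (hf : Function.Injective f) :
    (selMat f)ᵀ * selMat f = 1 := by
  ext p q
  have : ((selMat f)ᵀ * selMat f) p q = ((selMat f)ᵀ) p (f q) := by
    simpa using mul_selMat_apply ((selMat f)ᵀ) f p q
  rw [this]
  simp only [Matrix.transpose_apply, selMat, Matrix.of_apply, Matrix.one_apply]
  by_cases h : p = q
  · subst h; simp
  · rw [if_neg, if_neg h]
    intro hc
    exact h (hf hc).symm

/-- Left multiplication by a matrix with orthonormal columns preserves the `L²` operator norm. -/
lemma l2_norm_mul_left {a b c : ℕ} (P : Matrix (Fin a) (Fin b) ℝ)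
    (X : Matrix (Fin b) (Fin c) ℝ) (hP : Pᵀ * P = 1) : ‖P * X‖ = ‖X‖ := by
  have hPH : Pᴴ = Pᵀ := by ext i j; simp [Matrix.conjTranspose_apply]
  have h1 : (P * X)ᴴ * (P * X) = Xᴴ * X := by
    rw [Matrix.conjTranspose_mul, hPH, Matrix.mul_assoc, ← Matrix.mul_assoc Pᵀ P X, hP,
      Matrix.one_mul]
  have h2 := Matrix.l2_opNorm_conjTranspose_mul_self (P * X)
  rw [h1, Matrix.l2_opNorm_conjTranspose_mul_self X] at h2
  exact (mul_self_inj (norm_nonneg _) (norm_nonneg _)).mp h2.symm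

/-- Right multiplication by the transpose of a matrix with orthonormal columns preserves the
`L²` operator norm. -/
lemma l2_norm_mul_right {a b c : ℕ} (X : Matrix (Fin c) (Fin b) ℝ)
    (Q : Matrix (Fin a) (Fin b) ℝ) (hQ : Qᵀ * Q = 1) : ‖X * Qᵀ‖ = ‖X‖ := by
  have hXH : ∀ {d e : ℕ} (Y : Matrix (Fin d) (Fin e) ℝ), Yᴴ = Yᵀ := by
    intro d e Y; ext i j; simp [Matrix.conjTranspose_apply]
  have h1 : ‖X * Qᵀ‖ = ‖(X * Qᵀ)ᴴ‖ := (Matrix.l2_opNorm_conjTranspose _).symm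
  rw [h1, hXH, Matrix.transpose_mul, Matrix.transpose_transpose,
    l2_norm_mul_left Q Xᵀ hQ, ← hXH, Matrix.l2_opNorm_conjTranspose]

/-- `γ_k^{cgme} = ‖(β_{k+1} e₁, G_k)‖` for `1 ≤ k ≤ n-1`, where `G_k` is the
trailing submatrix of `B` with rows `k+1,…,n+1` and columns `k+1,…,n` (1-based), and the
column `β_{k+1} e₁` is prepended to it. -/
theorem cgme_rank_k_error_eq_norm_augmented_trailing_matrix
    (m n : ℕ) (hn : 2 ≤ n) (hmn : n < m)
    (A : Matrix (Fin m) (Fin n) ℝ)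
    (P : Matrix (Fin m) (Fin (n + 1)) ℝ) (hP : Pᵀ * P = 1)
    (Q : Matrix (Fin n) (Fin n) ℝ) (hQ : Qᵀ * Q = 1)
    (α : Fin n → ℝ) (hα : ∀ i, 0 < α i)
    (β : Fin n → ℝ) (hβ : ∀ i, 0 < β i)
    (B : Matrix (Fin (n + 1)) (Fin n) ℝ)
    (hB : ∀ (i : Fin (n + 1)) (j : Fin n),
      B i j = if (i : ℕ) = (j : ℕ) then α j
        else if (i : ℕ) = (j : ℕ) + 1 then β j else 0)
    (hA : A = P * B * Qᵀ)
    (σ : Fin n → ℝ) (hσpos : ∀ i, 0 < σ i)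
    (hσstrict : ∀ i j : Fin n, i < j → σ j < σ i)
    (hσ : ∀ i : Fin n, σ i = singVal A ((i : ℕ) + 1))
    (k : ℕ) (hk1 : 1 ≤ k) (hk2 : k ≤ n - 1)
    (M : Matrix (Fin (n - k + 1)) (Fin (n - k + 1)) ℝ)
    (hM : ∀ (i j : Fin (n - k + 1)),
      M i j = if (j : ℕ) = 0 then
          (if (i : ℕ) = 0 then B ⟨k, by omega⟩ ⟨k - 1, by omega⟩ else 0)
        else B ⟨k + (i : ℕ), by have := i.2; omega⟩ ⟨k + (j : ℕ) - 1, by have := j.2; omega⟩) :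
    specNorm ((1 - colSub P k (by omega) * (colSub P k (by omega))ᵀ) * A) = specNorm M := by
  have hkn : k ≤ n - 1 := hk2
  have hk_le : k ≤ n + 1 := by omega
  -- the column-embedding function for `colSub`
  set e : Fin k → Fin (n + 1) := fun j => ⟨j.1, by have := j.2; omega⟩ with he
  have he_inj : Function.Injective e := by
    intro p q h
    have := congrArg Fin.val h
    simp only [he] at this
    exact Fin.ext this
  have hPk : ∀ h : k ≤ n + 1, colSub P k h = P * selMat e := by
    intro h
    ext i j
    rw [mul_selMat_apply]
    rfl
  -- the zeroed-out matrix
  set Z : Matrix (Fin (n + 1)) (Fin n) ℝ :=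
    Matrix.of (fun i j => if (i : ℕ) < k then 0 else B i j) with hZ
  -- row/column embeddings for `M`
  set f : Fin (n - k + 1) → Fin (n + 1) := fun p => ⟨k + p.1, by have := p.2; omega⟩ with hf
  set g : Fin (n - k + 1) → Fin n := fun q => ⟨k + q.1 - 1, by have := q.2; omega⟩ with hg
  have hf_inj : Function.Injective f := by
    intro p q h
    have := congrArg Fin.val h
    simp only [hf] at this
    exact Fin.ext (by omega)
  have hg_inj : Function.Injective g := by
    intro p q h
    have := congrArg Fin.val h
    simp only [hg] at this
    have hp := p.2; have hq := q.2
    exact Fin.ext (by omega)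
  -- key identity 1 : (1 - Pk Pkᵀ) A = P * Z * Qᵀ
  have key1 : (1 - colSub P k hk_le * (colSub P k hk_le)ᵀ) * A = P * Z * Qᵀ := by
    rw [hPk, hA, Matrix.sub_mul, Matrix.one_mul, Matrix.transpose_mul]
    have hE : selMat e * ((selMat e)ᵀ * B) = B - Z := by
      ext i j
      by_cases hi : (i : ℕ) < k
      · have := selMat_mul_apply_eq e he_inj ((selMat e)ᵀ * B) i ⟨i.1, hi⟩ (Fin.ext rfl) j
        rw [this]
        have h2 : ((selMat e)ᵀ * B) ⟨i.1, hi⟩ j = B i j := by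
          have h4 : ((selMat e)ᵀ * B) ⟨i.1, hi⟩ j = (Bᵀ * selMat e) j ⟨i.1, hi⟩ := by
            rw [← Matrix.transpose_apply (Bᵀ * selMat e) ⟨i.1, hi⟩ j, Matrix.transpose_mul,
              Matrix.transpose_transpose]
          rw [h4, mul_selMat_apply]
          exact congrArg (fun x => B x j) (Fin.ext rfl)
        rw [h2]
        simp [hZ, Matrix.sub_apply, hi]
      · have hz : ∀ p : Fin k, i ≠ e p := by
          intro p hc
          have := congrArg Fin.val hc
          simp only [he] at this
          have := p.2
          omega
        rw [selMat_mul_apply_zero e _ i hz j]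
        simp [hZ, Matrix.sub_apply, hi]
    have assoc : P * selMat e * ((selMat e)ᵀ * Pᵀ) * (P * B * Qᵀ)
        = P * (selMat e * ((selMat e)ᵀ * B)) * Qᵀ := by
      simp only [Matrix.mul_assoc]
      rw [← Matrix.mul_assoc Pᵀ P, hP, Matrix.one_mul]
    rw [assoc, hE, Matrix.mul_sub, Matrix.sub_mul]
    abel
  -- key identity 2 : Z = selMat f * M * (selMat g)ᵀ
  have key2 : Z = selMat f * M * (selMat g)ᵀ := by
    ext i j
    rw [Matrix.mul_assoc]
    by_cases hi : (i : ℕ) < k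
    · rw [selMat_mul_apply_zero f _ i (fun p hc => by
        have := congrArg Fin.val hc
        simp only [hf] at this
        omega) j]
      simp [hZ, hi]
    · have hin : (i : ℕ) - k < n - k + 1 := by have := i.2; omega
      set p₀ : Fin (n - k + 1) := ⟨i.1 - k, hin⟩ with hp₀
      have hip : i = f p₀ := Fin.ext (by simp [hf, hp₀]; omega)
      rw [selMat_mul_apply_eq f hf_inj _ i p₀ hip j]
      by_cases hj : (j : ℕ) + 1 < k
      · rw [mul_selMatT_apply_zero g _ p₀ j (fun q hc => by
          have := congrArg Fin.val hc
          simp only [hg] at this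
          omega)]
        have : B i j = 0 := by
          rw [hB]
          rw [if_neg (by omega), if_neg (by omega)]
        simp [hZ, hi, this]
      · have hjn : (j : ℕ) + 1 - k < n - k + 1 := by have := j.2; omega
        set q₀ : Fin (n - k + 1) := ⟨j.1 + 1 - k, hjn⟩ with hq₀
        have hjq : j = g q₀ := Fin.ext (by simp [hg, hq₀]; omega)
        rw [mul_selMatT_apply_eq g hg_inj _ p₀ j q₀ hjq]
        rw [hM p₀ q₀]
        by_cases hq0 : (q₀ : ℕ) = 0
        · -- j = k - 1
          have hjv : (j : ℕ) = k - 1 := by simp [hq₀] at hq0; omega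
          rw [if_pos hq0]
          by_cases hp0 : (p₀ : ℕ) = 0
          · have hiv : (i : ℕ) = k := by simp [hp₀] at hp0; omega
            rw [if_pos hp0]
            have h1 : i = (⟨k, by omega⟩ : Fin (n + 1)) := Fin.ext hiv
            have h2 : j = (⟨k - 1, by omega⟩ : Fin n) := Fin.ext hjv
            simp [hZ, hi, h1, h2]
          · have hiv : k < (i : ℕ) := by simp [hp₀] at hp0; omega
            rw [if_neg hp0]
            have : B i j = 0 := by
              rw [hB, if_neg (by omega), if_neg (by omega)]
            simp [hZ, hi, this]
        · rw [if_neg hq0]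
          have h1 : (⟨k + (p₀ : ℕ), by have := p₀.2; omega⟩ : Fin (n + 1)) = i :=
            Fin.ext (by simp [hp₀]; omega)
          have h2 : (⟨k + (q₀ : ℕ) - 1, by have := q₀.2; omega⟩ : Fin n) = j :=
            Fin.ext (by simp [hq₀]; omega)
          rw [h1, h2]
          simp [hZ, hi]
  -- put it together
  rw [specNorm_eq_l2, specNorm_eq_l2, key1, Matrix.mul_assoc,
    l2_norm_mul_left P _ hP, l2_norm_mul_right Z Q hQ, key2, Matrix.mul_assoc,
    l2_norm_mul_left (selMat f) _ (selMatT_mul_self f hf_inj),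
    l2_norm_mul_right M (selMat g) (selMatT_mul_self g hg_inj)]
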